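/- arXiv:1308.2537 — 2 statements merged into one kernel-verified Lean document; each statement's English description precedes it below -/
import Mathlib

section
/- Let T be a rooted phylogenetic X-tree and L a minimal topological lasso for T such that Γ(L) is a block graph. Then for every interior vertex v of T there exists a unique block B of Γ(L) with v = lca_T(V(B)); consequently the map v ↦ B_v is a bijection between the interior vertices of T and the blocks of Γ(L), with inverse B ↦ lca_T(V(B)). -/
open scoped Classical

/-- A rooted `X`-tree on vertex type `V`: a finite rooted tree encoded by a parent
function, whose leaves (the vertices with no children) are bijectively labelled by `X`. -/
structure XTree (X V : Type) where
  root : V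
  parent : V → V
  parent_root : parent root = root
  reaches : ∀ v : V, ∃ n : ℕ, parent^[n] v = root
  leaf : X → V
  leaf_inj : Function.Injective leaf
  leaf_iff : ∀ v : V, (∀ w : V, parent w = v → w = v) ↔ v ∈ Set.range leaf

namespace XTree

variable {X V : Type}

/-- The children of a vertex. -/
def children (T : XTree X V) (v : V) : Set V := {w | T.parent w = v ∧ w ≠ v}

def IsLeaf (T : XTree X V) (v : V) : Prop := v ∈ Set.range T.leaf

def Interior (T : XTree X V) (v : V) : Prop := ¬ T.IsLeaf v

/-- Phylogenetic: root has at least two children, and no non-root vertex has exactly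
one child (no degree-two vertices apart from possibly the root). -/
def IsPhylo (T : XTree X V) : Prop :=
  2 ≤ (T.children T.root).ncard ∧
    ∀ v : V, v ≠ T.root → T.Interior v → 2 ≤ (T.children v).ncard

/-- `T.Desc v w` : `w` is a descendant of `v` (or equal to `v`). -/
def Desc (T : XTree X V) (v w : V) : Prop := ∃ n : ℕ, T.parent^[n] w = v

/-- The set of leaf labels below a vertex. -/
def leafSet (T : XTree X V) (v : V) : Set X := {x | T.Desc v (T.leaf x)}

/-- `v` is the last common ancestor of the set `S` of vertices. -/
def IsLCA (T : XTree X V) (v : V) (S : Set V) : Prop :=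
  (∀ w ∈ S, T.Desc v w) ∧ ∀ u : V, (∀ w ∈ S, T.Desc u w) → T.Desc u v

/-- Not a star tree: some interior vertex other than the root. -/
def NonDegenerate (T : XTree X V) : Prop := ∃ v : V, T.Interior v ∧ v ≠ T.root

end XTree

/-- A cord: a 2-element subset of `X`. -/
def IsCord {X : Type} (c : Set X) : Prop := ∃ a b : X, a ≠ b ∧ c = {a, b}

/-- The graph `Γ(L)` with vertex set `X` and edge set `L`. -/
def cordGraph {X : Type} (L : Set (Set X)) : SimpleGraph X where
  Adj a b := a ≠ b ∧ ({a, b} : Set X) ∈ L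
  symm := by
    constructor
    intro a b h
    exact ⟨Ne.symm h.1, by rw [Set.pair_comm]; exact h.2⟩
  loopless := by constructor; intro a h; exact h.1 rfl

/-- Topological lasso, via the child-edge graph characterization: for every interior
vertex, any two distinct child subtrees are joined by a cord of `L`. -/
def XTree.IsTopoLasso {X V : Type} (T : XTree X V) (L : Set (Set X)) : Prop :=
  ∀ v c₁ c₂ : V, c₁ ∈ T.children v → c₂ ∈ T.children v → c₁ ≠ c₂ →
    ∃ a b : X, a ∈ T.leafSet c₁ ∧ b ∈ T.leafSet c₂ ∧ ({a, b} : Set X) ∈ L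

/-- Set-inclusion minimal topological lasso. -/
def XTree.IsMinTopoLasso {X V : Type} (T : XTree X V) (L : Set (Set X)) : Prop :=
  T.IsTopoLasso L ∧ ∀ L' ⊆ L, T.IsTopoLasso L' → L' = L

/-- A nonempty vertex set inducing a connected subgraph with no cut vertex. -/
def GoodSet {α : Type} (G : SimpleGraph α) (B : Set α) : Prop :=
  B.Nonempty ∧ (G.induce B).Connected ∧
    ∀ v ∈ B, (B \ {v}).Nonempty → (G.induce (B \ {v})).Connected

/-- A block: a maximal connected induced subgraph without a cut vertex. -/
def IsBlock {α : Type} (G : SimpleGraph α) (B : Set α) : Prop :=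
  GoodSet G B ∧ ∀ C : Set α, GoodSet G C → B ⊆ C → B = C

/-- A block graph: every block is a clique. -/
def IsBlockGraph {α : Type} (G : SimpleGraph α) : Prop :=
  ∀ B : Set α, IsBlock G B → G.IsClique B

/-- A cut vertex: deleting it disconnects the graph. -/
def IsCutVtx {α : Type} (G : SimpleGraph α) (v : α) : Prop :=
  ¬ (G.induce {w | w ≠ v}).Connected

/-- Claw-free: no induced `K_{1,3}`. -/
def ClawFree {α : Type} (G : SimpleGraph α) : Prop :=
  ¬ ∃ v a b c : α, a ≠ b ∧ a ≠ c ∧ b ≠ c ∧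
    G.Adj v a ∧ G.Adj v b ∧ G.Adj v c ∧ ¬ G.Adj a b ∧ ¬ G.Adj a c ∧ ¬ G.Adj b c

/-- The child-edge graph `G(L,v)`: vertices are the children of `v` (equivalently
the child edges of `v`), two of them adjacent if a cord of `L` joins their subtrees. -/
def childGraph {X V : Type} (T : XTree X V) (L : Set (Set X)) (v : V) :
    SimpleGraph {c : V // c ∈ T.children v} where
  Adj c₁ c₂ := c₁ ≠ c₂ ∧ ∃ a b : X,
    a ∈ T.leafSet (c₁ : V) ∧ b ∈ T.leafSet (c₂ : V) ∧ ({a, b} : Set X) ∈ L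
  symm := by
    constructor
    rintro c₁ c₂ ⟨h, a, b, ha, hb, hm⟩
    exact ⟨Ne.symm h, b, a, hb, ha, by rw [Set.pair_comm]; exact hm⟩
  loopless := by constructor; rintro c ⟨h, -⟩; exact h rfl

/-- `cl(T)`: the clusters of non-root interior vertices. -/
def clSet {X V : Type} (T : XTree X V) : Set (Set X) :=
  {A | ∃ v : V, v ≠ T.root ∧ T.Interior v ∧ A = T.leafSet v}

/-- A cluster marker map for `T` and the ordering of `X`:
`f A` is the `σ`-least element of `A` not used as marker of a proper subcluster. -/
def IsClusterMarker {X V : Type} [LinearOrder X] (T : XTree X V) (f : Set X → X) : Prop :=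
  ∀ A ∈ clSet T,
    ((∃ B ∈ clSet T, B ⊂ A) →
      IsLeast (A \ {y | ∃ B ∈ clSet T, B ⊂ A ∧ f B = y}) (f A)) ∧
    ((¬ ∃ B ∈ clSet T, B ⊂ A) → IsLeast A (f A))

/-- The marker of a child `c` of an interior vertex: the label of `c` if `c` is a leaf,
and `f (L(c))` if `c` is interior. -/
def markRel {X V : Type} (T : XTree X V) (f : Set X → X) (c : V) (a : X) : Prop :=
  T.leaf a = c ∨ (T.Interior c ∧ a = f (T.leafSet c))

/-- `L_{(T,f)}(v)`: all cords between markers of distinct children of `v`. -/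
def lassoAt {X V : Type} (T : XTree X V) (f : Set X → X) (v : V) : Set (Set X) :=
  {c | ∃ c₁ c₂ : V, c₁ ∈ T.children v ∧ c₂ ∈ T.children v ∧ c₁ ≠ c₂ ∧
    ∃ a b : X, markRel T f c₁ a ∧ markRel T f c₂ b ∧ c = {a, b}}

/-- `L_{(T,f)}`: the union over all interior vertices of `L_{(T,f)}(v)`. -/
def lassoFull {X V : Type} (T : XTree X V) (f : Set X → X) : Set (Set X) :=
  {c | ∃ v : V, T.Interior v ∧ c ∈ lassoAt T f v}

/-- An equidistant proper edge-weighting of `T`, encoded by the height function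
`t v` = distance from `v` to any leaf below it (so all leaves are equidistant
from the root); properness: interior edges have positive weight. -/
def EquidistantProper {X V : Type} (T : XTree X V) (t : V → ℝ) : Prop :=
  (∀ x : X, t (T.leaf x) = 0) ∧ (∀ v : V, t v ≤ t (T.parent v)) ∧
    ∀ v : V, v ≠ T.root → T.Interior v → t v < t (T.parent v)

/-- Equivalence of two `X`-trees: a root-, parent- and labelling-preserving bijection. -/
def TreeEquiv {X V V' : Type} (T : XTree X V) (T' : XTree X V') : Prop :=
  ∃ φ : V ≃ V', φ T.root = T'.root ∧ (∀ v, φ (T.parent v) = T'.parent (φ v)) ∧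
    ∀ x, φ (T.leaf x) = T'.leaf x

/-- `S` is (equivalent to) the restriction `T|_Y`: the clusters of `S` are exactly the
nonempty traces on `Y` of the clusters of `T`. -/
def IsRestriction {X : Type} (Y : Set X) {V W : Type}
    (T : XTree X V) (S : XTree (↥Y) W) : Prop :=
  ∀ A : Set X, A ⊆ Y →
    ((∃ w : W, A = Subtype.val '' S.leafSet w) ↔ (A.Nonempty ∧ ∃ v : V, A = T.leafSet v ∩ Y))

/-- The restriction `L|_Y` of a set of cords of `X` to cords of `Y`. -/
def restrictLasso {X : Type} (Y : Set X) (L : Set (Set X)) : Set (Set ↥Y) :=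
  {c | ∃ a b : ↥Y, a ≠ b ∧ c = {a, b} ∧ ({(a : X), (b : X)} : Set X) ∈ L}


/-! ### Auxiliary lemmas -/

section TreeAux

variable {X V : Type}

namespace XTree

variable (T : XTree X V)

lemma desc_refl (v : V) : T.Desc v v := ⟨0, rfl⟩

lemma desc_trans {u v w : V} (h1 : T.Desc u v) (h2 : T.Desc v w) : T.Desc u w := by
  obtain ⟨m, hm⟩ := h1
  obtain ⟨n, hn⟩ := h2
  exact ⟨m + n, by rw [Function.iterate_add_apply, hn, hm]⟩

lemma iterate_root (n : ℕ) : T.parent^[n] T.root = T.root := by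
  induction n with
  | zero => rfl
  | succ k ih => rw [Function.iterate_succ_apply', ih, T.parent_root]

lemma eq_root_of_cycle {v : V} {m : ℕ} (hm : m ≠ 0) (h : T.parent^[m] v = v) :
    v = T.root := by
  obtain ⟨n, hn⟩ := T.reaches v
  have key : ∀ k, T.parent^[k * m] v = v := by
    intro k
    induction k with
    | zero => simp
    | succ j ih => rw [Nat.succ_mul, Function.iterate_add_apply, h, ih]
  have hle : n ≤ n * m := Nat.le_mul_of_pos_right n (Nat.pos_of_ne_zero hm)
  calc v = T.parent^[n * m] v := (key n).symm
    _ = T.parent^[n * m - n] (T.parent^[n] v) := by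
        rw [← Function.iterate_add_apply]
        congr 1
        omega
    _ = T.root := by rw [hn, T.iterate_root]

lemma desc_antisymm {u v : V} (h1 : T.Desc u v) (h2 : T.Desc v u) : u = v := by
  obtain ⟨m, hm⟩ := h1
  obtain ⟨n, hn⟩ := h2
  rcases Nat.eq_zero_or_pos (m + n) with h0 | hpos
  · have hm0 : m = 0 := by omega
    rw [hm0] at hm
    exact hm.symm
  · have hc : T.parent^[m + n] u = u := by
      rw [Function.iterate_add_apply, hn, hm]
    have hu : u = T.root := T.eq_root_of_cycle (by omega) hc
    have hc2 : T.parent^[n + m] v = v := by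
      rw [Function.iterate_add_apply, hm, hn]
    have hv : v = T.root := T.eq_root_of_cycle (by omega) hc2
    rw [hu, hv]

lemma desc_comparable {u u' w : V} (h : T.Desc u w) (h' : T.Desc u' w) :
    T.Desc u u' ∨ T.Desc u' u := by
  obtain ⟨i, hi⟩ := h
  obtain ⟨j, hj⟩ := h'
  rcases Nat.le_total i j with hle | hle
  · right
    refine ⟨j - i, ?_⟩
    rw [← hi, ← Function.iterate_add_apply, ← hj]
    congr 1
    omega
  · left
    refine ⟨i - j, ?_⟩
    rw [← hj, ← Function.iterate_add_apply, ← hi]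
    congr 1
    omega

lemma desc_leaf_eq {x : X} {w : V} (h : T.Desc (T.leaf x) w) : w = T.leaf x := by
  have hx : ∀ w, T.parent w = T.leaf x → w = T.leaf x :=
    (T.leaf_iff (T.leaf x)).mpr ⟨x, rfl⟩
  obtain ⟨n, hn⟩ := h
  induction n generalizing w with
  | zero => exact hn
  | succ k ih =>
    rw [Function.iterate_succ_apply] at hn
    exact hx w (ih hn)

lemma leafSet_leaf (x : X) : T.leafSet (T.leaf x) = {x} := by
  ext y
  simp only [leafSet, Set.mem_setOf_eq, Set.mem_singleton_iff]
  constructor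
  · intro h
    exact T.leaf_inj (T.desc_leaf_eq h)
  · rintro rfl
    exact T.desc_refl _

lemma desc_of_child {v c : V} (hc : c ∈ T.children v) : T.Desc v c :=
  ⟨1, by simpa using hc.1⟩

lemma exists_child_desc {v w : V} (h : T.Desc v w) (hne : w ≠ v) :
    ∃ c ∈ T.children v, T.Desc c w := by
  have hex : ∃ n, T.parent^[n] w = v := h
  have hspec : T.parent^[Nat.find hex] w = v := Nat.find_spec hex
  have hpos : Nat.find hex ≠ 0 := by
    intro h0
    rw [h0] at hspec
    exact hne hspec
  refine ⟨T.parent^[Nat.find hex - 1] w, ⟨?_, ?_⟩, ⟨Nat.find hex - 1, rfl⟩⟩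
  · have h1 : T.parent^[(Nat.find hex - 1) + 1] w = v := by
      rw [show Nat.find hex - 1 + 1 = Nat.find hex from by omega]
      exact hspec
    rw [Function.iterate_succ_apply'] at h1
    exact h1
  · intro hcv
    exact Nat.find_min hex (by omega : Nat.find hex - 1 < Nat.find hex) hcv

lemma child_unique {v c c' w : V} (hc : c ∈ T.children v) (hc' : c' ∈ T.children v)
    (h : T.Desc c w) (h' : T.Desc c' w) : c = c' := by
  have key : ∀ d d' : V, d ∈ T.children v → d' ∈ T.children v → T.Desc d' d → d = d' := by
    intro d d' hd hd' hdd
    obtain ⟨k, hk⟩ := hdd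
    rcases Nat.eq_zero_or_pos k with h0 | hpos
    · rw [h0] at hk
      simpa using hk
    · exfalso
      have hk1 : T.parent^[(k - 1) + 1] d = d' := by
        rw [show k - 1 + 1 = k from by omega]
        exact hk
      rw [Function.iterate_succ_apply, hd.1] at hk1
      have hcyc : T.parent^[k] v = v := by
        rw [show k = (k - 1) + 1 from by omega, Function.iterate_succ_apply', hk1, hd'.1]
      have hvroot := T.eq_root_of_cycle (by omega) hcyc
      have : d' = v := by rw [← hk1, hvroot, T.iterate_root]
      exact hd'.2 this
  rcases T.desc_comparable h h' with h1 | h1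
  · exact (key c' c hc' hc h1).symm
  · exact key c c' hc hc' h1

lemma leafSet_child_subset {v c : V} (hc : c ∈ T.children v) :
    T.leafSet c ⊆ T.leafSet v :=
  fun _ h => T.desc_trans (T.desc_of_child hc) h

lemma leafSet_child_disjoint {v c c' : V} (hc : c ∈ T.children v) (hc' : c' ∈ T.children v)
    (hne : c ≠ c') {x : X} (h : x ∈ T.leafSet c) (h' : x ∈ T.leafSet c') : False :=
  hne (T.child_unique hc hc' h h')

lemma interior_ne_leaf {v : V} (hv : T.Interior v) (x : X) : T.leaf x ≠ v :=
  fun h => hv ⟨x, h⟩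

lemma exists_child {v : V} (hv : T.Interior v) : ∃ c, c ∈ T.children v := by
  by_contra h
  push_neg at h
  apply hv
  exact (T.leaf_iff v).mp (fun w hw => by
    by_contra hne
    exact h w ⟨hw, hne⟩)

lemma interior_of_child {v c : V} (hc : c ∈ T.children v) : T.Interior v :=
  fun hleaf => hc.2 ((T.leaf_iff v).mpr hleaf c hc.1)

lemma leafSet_nonempty [Fintype V] (v : V) : (T.leafSet v).Nonempty := by
  have main : ∀ n : ℕ, ∀ v : V, ({w | T.Desc v w}).ncard ≤ n → (T.leafSet v).Nonempty := by
    intro n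
    induction n with
    | zero =>
      intro v hv
      exfalso
      have hpos : 0 < ({w | T.Desc v w}).ncard :=
        (Set.ncard_pos (Set.toFinite _)).mpr ⟨v, T.desc_refl v⟩
      omega
    | succ n ih =>
      intro v hv
      by_cases hleaf : T.IsLeaf v
      · obtain ⟨x, hx⟩ := hleaf
        exact ⟨x, show T.Desc v (T.leaf x) from hx ▸ T.desc_refl _⟩
      · obtain ⟨c, hc⟩ := T.exists_child hleaf
        have hsub1 : {w | T.Desc c w} ⊆ {w | T.Desc v w} :=
          fun w hw => T.desc_trans (T.desc_of_child hc) hw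
        have hvmem : v ∉ {w | T.Desc c w} :=
          fun habs => hc.2 (T.desc_antisymm habs (T.desc_of_child hc))
        have hss : {w | T.Desc c w} ⊂ {w | T.Desc v w} := by
          rw [Set.ssubset_def]
          exact ⟨hsub1, fun habs => hvmem (habs (T.desc_refl v))⟩
        have hlt := Set.ncard_lt_ncard hss (Set.toFinite _)
        obtain ⟨x, hx⟩ := ih c (by omega)
        exact ⟨x, T.leafSet_child_subset hc hx⟩
  exact main _ v le_rfl

lemma lca_pair {v c c' w w' : V} (hc : c ∈ T.children v) (hc' : c' ∈ T.children v)
    (hne : c ≠ c') (hw : T.Desc c w) (hw' : T.Desc c' w') :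
    ∀ u, T.Desc u w → T.Desc u w' → T.Desc u v := by
  intro u hu hu'
  have hvw : T.Desc v w := T.desc_trans (T.desc_of_child hc) hw
  rcases T.desc_comparable hu hvw with h1 | h1
  · exact h1
  · by_cases huv : u = v
    · rw [huv]
      exact T.desc_refl v
    · obtain ⟨c'', hc'', hcu⟩ := T.exists_child_desc h1 huv
      have e1 : c'' = c := T.child_unique hc'' hc (T.desc_trans hcu hu) hw
      have e2 : c'' = c' := T.child_unique hc'' hc' (T.desc_trans hcu hu') hw'
      exact absurd (e1 ▸ e2) hne

lemma exists_lca2 (w1 w2 : V) :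
    ∃ u, T.Desc u w1 ∧ T.Desc u w2 ∧
      ∀ u', T.Desc u' w1 → T.Desc u' w2 → T.Desc u' u := by
  have hroot : T.Desc T.root w2 := T.reaches w2
  have hex : ∃ n, T.Desc (T.parent^[n] w1) w2 := by
    obtain ⟨k, hk⟩ := T.reaches w1
    exact ⟨k, by rw [hk]; exact hroot⟩
  refine ⟨T.parent^[Nat.find hex] w1, ⟨Nat.find hex, rfl⟩, Nat.find_spec hex, ?_⟩
  intro u' h1 h2
  obtain ⟨i, hi⟩ := h1
  rcases Nat.lt_or_ge i (Nat.find hex) with hlt | hge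
  · exact absurd (show T.Desc (T.parent^[i] w1) w2 by rw [hi]; exact h2)
      (Nat.find_min hex hlt)
  · refine ⟨i - Nat.find hex, ?_⟩
    rw [← Function.iterate_add_apply, show i - Nat.find hex + Nat.find hex = i from by omega]
    exact hi

lemma cord_data {a b : X} (hne : a ≠ b) :
    ∃ v c c', T.Interior v ∧ c ∈ T.children v ∧ c' ∈ T.children v ∧ c ≠ c' ∧
      a ∈ T.leafSet c ∧ b ∈ T.leafSet c' ∧
      ∀ u, T.Desc u (T.leaf a) → T.Desc u (T.leaf b) → T.Desc u v := by
  obtain ⟨u, hua, hub, hm⟩ := T.exists_lca2 (T.leaf a) (T.leaf b)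
  have hlne : T.leaf a ≠ T.leaf b := fun h => hne (T.leaf_inj h)
  have hna : T.leaf a ≠ u := by
    intro h
    rw [← h] at hub
    exact hlne (T.desc_leaf_eq hub).symm
  have hnb : T.leaf b ≠ u := by
    intro h
    rw [← h] at hua
    exact hlne (T.desc_leaf_eq hua)
  have hint : T.Interior u := by
    rintro ⟨x, hx⟩
    rw [← hx] at hua
    exact hna (by rw [← hx]; exact (T.desc_leaf_eq hua).symm ▸ rfl)
  obtain ⟨c, hcmem, hca⟩ := T.exists_child_desc hua hna
  obtain ⟨c', hcmem', hcb⟩ := T.exists_child_desc hub hnb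
  have hcc : c ≠ c' := by
    intro h
    have h1 : T.Desc c u := hm c hca (h ▸ hcb)
    have h2 : c = u := T.desc_antisymm h1 (T.desc_of_child hcmem)
    exact hcmem.2 h2
  exact ⟨u, c, c', hint, hcmem, hcmem', hcc, hca, hcb, hm⟩

lemma lca_eq {v v' c c' d d' : V} {a b : X}
    (hc : c ∈ T.children v) (hc' : c' ∈ T.children v) (hne : c ≠ c')
    (ha : a ∈ T.leafSet c) (hb : b ∈ T.leafSet c')
    (hd : d ∈ T.children v') (hd' : d' ∈ T.children v') (hne' : d ≠ d')
    (ha' : a ∈ T.leafSet d) (hb' : b ∈ T.leafSet d') :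
    v = v' ∧ c = d ∧ c' = d' := by
  have h1 : T.Desc v' v :=
    T.lca_pair hc hc' hne ha hb v' (T.desc_trans (T.desc_of_child hd) ha')
      (T.desc_trans (T.desc_of_child hd') hb')
  have h2 : T.Desc v v' :=
    T.lca_pair hd hd' hne' ha' hb' v (T.desc_trans (T.desc_of_child hc) ha)
      (T.desc_trans (T.desc_of_child hc') hb)
  have hvv : v = v' := T.desc_antisymm h2 h1
  subst hvv
  exact ⟨rfl, T.child_unique hc hd ha ha', T.child_unique hc' hd' hb hb'⟩

lemma two_children [Fintype V] (hph : T.IsPhylo) {v : V} (hv : T.Interior v) :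
    ∃ c c', c ∈ T.children v ∧ c' ∈ T.children v ∧ c ≠ c' := by
  have h2 : 2 ≤ (T.children v).ncard := by
    by_cases hr : v = T.root
    · rw [hr]; exact hph.1
    · exact hph.2 v hr hv
  obtain ⟨c, hc⟩ := Set.nonempty_of_ncard_ne_zero (show (T.children v).ncard ≠ 0 by omega)
  obtain ⟨c', hc', hcc⟩ := Set.exists_ne_of_one_lt_ncard (s := T.children v) (by omega) c
  exact ⟨c, c', hc, hc', (Ne.symm hcc)⟩

end XTree

lemma pair_eq_cases {α : Type*} {a b c d : α} (hab : a ≠ b)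
    (h : ({a, b} : Set α) = {c, d}) : (a = c ∧ b = d) ∨ (a = d ∧ b = c) := by
  have hac : a ∈ ({c, d} : Set α) := h ▸ (by simp : a ∈ ({a, b} : Set α))
  have hbc : b ∈ ({c, d} : Set α) := h ▸ (by simp : b ∈ ({a, b} : Set α))
  simp only [Set.mem_insert_iff, Set.mem_singleton_iff] at hac hbc
  rcases hac with h1 | h1 <;> rcases hbc with h2 | h2
  · exact absurd (h1.trans h2.symm) hab
  · exact Or.inl ⟨h1, h2⟩
  · exact Or.inr ⟨h1, h2⟩
  · exact absurd (h1.trans h2.symm) hab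

lemma cord_unique_aux {X V : Type} (T : XTree X V) {L : Set (Set X)}
    (hmin : T.IsMinTopoLasso L)
    {v c1 c2 : V} (hc1 : c1 ∈ T.children v) (hc2 : c2 ∈ T.children v) (hne : c1 ≠ c2)
    {a b a' b' : X} (ha : a ∈ T.leafSet c1) (hb : b ∈ T.leafSet c2)
    (ha' : a' ∈ T.leafSet c1) (hb' : b' ∈ T.leafSet c2)
    (he : ({a, b} : Set X) ∈ L) (he' : ({a', b'} : Set X) ∈ L) :
    ({a, b} : Set X) = {a', b'} := by
  by_contra hcon
  have hlasso' : T.IsTopoLasso (L \ {({a', b'} : Set X)}) := by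
    intro v0 d1 d2 hd1 hd2 hdne
    obtain ⟨p, q, hp, hq, hpq⟩ := hmin.1 v0 d1 d2 hd1 hd2 hdne
    by_cases hcase : ({p, q} : Set X) = {a', b'}
    · have hpqne : p ≠ q := fun h => T.leafSet_child_disjoint hd1 hd2 hdne hp (h ▸ hq)
      rcases pair_eq_cases hpqne hcase with ⟨hpa, hqb⟩ | ⟨hpb, hqa⟩
      · have hpa' : a' ∈ T.leafSet d1 := by rw [← hpa]; exact hp
        have hqb' : b' ∈ T.leafSet d2 := by rw [← hqb]; exact hq
        obtain ⟨hveq, h1eq, h2eq⟩ := T.lca_eq hc1 hc2 hne ha' hb' hd1 hd2 hdne hpa' hqb'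
        refine ⟨a, b, ?_, ?_, he, ?_⟩
        · rw [← h1eq]; exact ha
        · rw [← h2eq]; exact hb
        · simpa using hcon
      · have hpb' : b' ∈ T.leafSet d1 := by rw [← hpb]; exact hp
        have hqa' : a' ∈ T.leafSet d2 := by rw [← hqa]; exact hq
        obtain ⟨hveq, h1eq, h2eq⟩ := T.lca_eq hc2 hc1 (Ne.symm hne) hb' ha' hd1 hd2 hdne hpb' hqa'
        refine ⟨b, a, ?_, ?_, ?_, ?_⟩
        · rw [← h1eq]; exact hb
        · rw [← h2eq]; exact ha
        · rw [Set.pair_comm b a]; exact he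
        · simp only [Set.mem_singleton_iff]
          rw [Set.pair_comm b a]
          exact hcon
    · exact ⟨p, q, hp, hq, hpq, hcase⟩
  have heq := hmin.2 _ Set.diff_subset hlasso'
  rw [← heq] at he'
  simp at he'


/-! ### Graph auxiliary lemmas -/

section GraphAux

variable {α : Type}

def ConnWithin (G : SimpleGraph α) (S : Set α) (a b : α) : Prop :=
  Relation.ReflTransGen (fun p q => p ∈ S ∧ q ∈ S ∧ G.Adj p q) a b

lemma ConnWithin.mono {G : SimpleGraph α} {S S' : Set α} (h : S ⊆ S') {a b : α}
    (hc : ConnWithin G S a b) : ConnWithin G S' a b :=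
  Relation.ReflTransGen.mono (r := fun p q => p ∈ S ∧ q ∈ S ∧ G.Adj p q)
    (p := fun p q => p ∈ S' ∧ q ∈ S' ∧ G.Adj p q)
    (fun p q hpq => ⟨h hpq.1, h hpq.2.1, hpq.2.2⟩) a b hc

lemma ConnWithin.symm' {G : SimpleGraph α} {S : Set α} {a b : α}
    (h : ConnWithin G S a b) : ConnWithin G S b a := by
  have hsym : Symmetric (fun p q => p ∈ S ∧ q ∈ S ∧ G.Adj p q) :=
    fun p q hpq => ⟨hpq.2.1, hpq.1, hpq.2.2.symm⟩
  exact (@Relation.ReflTransGen.symmetric _ _ ⟨fun _ _ h' => hsym h'⟩).symm _ _ h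

lemma induce_connected_iff {G : SimpleGraph α} {S : Set α} :
    (G.induce S).Connected ↔ S.Nonempty ∧ ∀ a ∈ S, ∀ b ∈ S, ConnWithin G S a b := by
  constructor
  · intro h
    refine ⟨Set.nonempty_coe_sort.mp h.nonempty, ?_⟩
    intro a ha b hb
    obtain ⟨w⟩ := h.preconnected ⟨a, ha⟩ ⟨b, hb⟩
    have key : ∀ (u v : ↥S) (_ : (G.induce S).Walk u v), ConnWithin G S u.1 v.1 := by
      intro u v w
      induction w with
      | nil => exact Relation.ReflTransGen.refl
      | @cons u₁ u₂ u₃ hadj p ih =>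
        exact Relation.ReflTransGen.head ⟨u₁.2, u₂.2, hadj⟩ ih
    exact key _ _ w
  · rintro ⟨hne, h⟩
    rw [SimpleGraph.connected_iff]
    refine ⟨?_, hne.to_subtype⟩
    rintro ⟨a, ha⟩ ⟨b, hb⟩
    have key : ∀ b', ConnWithin G S a b' → ∀ hb' : b' ∈ S,
        (G.induce S).Reachable ⟨a, ha⟩ ⟨b', hb'⟩ := by
      intro b' hcw
      induction hcw with
      | refl => intro _; exact SimpleGraph.Reachable.refl _
      | @tail p q hap hstep ih =>
        intro hq
        exact (ih hstep.1).trans (SimpleGraph.Adj.reachable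
          (show (G.induce S).Adj ⟨p, hstep.1⟩ ⟨q, hq⟩ from hstep.2.2))
    exact key b (h a ha b hb) hb

lemma chain_connWithin_head {G : SimpleGraph α} :
    ∀ (l : List α), List.Chain' G.Adj l → ∀ a, l.head? = some a →
      ∀ b ∈ l, ConnWithin G {x | x ∈ l} a b := by
  intro l
  induction l with
  | nil => intro _ a ha; simp at ha
  | cons x t ih =>
    intro hch a ha b hb
    have hax : x = a := by simpa using ha
    subst hax
    rcases List.mem_cons.mp hb with rfl | hbt
    · exact Relation.ReflTransGen.refl
    · cases t with
      | nil => simp at hbt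
      | cons y t' =>
        have hadj : G.Adj x y := (List.isChain_cons_cons.mp hch).1
        have hyt : ConnWithin G {z | z ∈ y :: t'} y b :=
          ih (List.isChain_cons_cons.mp hch).2 y rfl b hbt
        refine Relation.ReflTransGen.head ⟨by simp, by simp, hadj⟩ ?_
        exact hyt.mono (fun z hz => by simp at hz ⊢; tauto)

lemma chain_connWithin {G : SimpleGraph α} {l : List α} (hch : List.Chain' G.Adj l)
    {a b : α} (ha : a ∈ l) (hb : b ∈ l) : ConnWithin G {x | x ∈ l} a b := by
  cases l with
  | nil => simp at ha
  | cons x t =>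
    have h1 := chain_connWithin_head _ hch x rfl a ha
    have h2 := chain_connWithin_head _ hch x rfl b hb
    exact h1.symm'.trans h2

lemma connWithin_to_path {G : SimpleGraph α} {S : Set α} {a b : α}
    (h : ConnWithin G S a b) (ha : a ∈ S) :
    ∃ l : List α, l.Nodup ∧ List.Chain' G.Adj l ∧ l.head? = some a ∧
      l.getLast? = some b ∧ ∀ x ∈ l, x ∈ S := by
  induction h with
  | refl => exact ⟨[a], by simp, List.isChain_singleton _, rfl, rfl, by simpa⟩
  | @tail c b hac hstep ih =>
    obtain ⟨l, hnd, hch, hhd, hlast, hmem⟩ := ih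
    by_cases hbl : b ∈ l
    · obtain ⟨l1, l2, rfl⟩ := List.append_of_mem hbl
      refine ⟨l1 ++ [b], ?_, ?_, ?_, ?_, ?_⟩
      · exact hnd.sublist
          (List.Sublist.append_left (List.cons_sublist_cons.mpr (List.nil_sublist l2)) l1)
      · exact hch.prefix ⟨l2, by simp⟩
      · cases l1 with
        | nil => simpa using hhd
        | cons z t => simpa using hhd
      · exact List.getLast?_concat
      · intro x hx
        rcases List.mem_append.mp hx with h | h
        · exact hmem x (List.mem_append.mpr (Or.inl h))
        · simp at h; subst h; exact hstep.2.1
    · refine ⟨l ++ [b], ?_, ?_, ?_, ?_, ?_⟩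
      · exact hnd.append (by simp) (by intro z hz hz'; simp at hz'; subst hz'; exact hbl hz)
      · refine List.isChain_append.mpr ?_
        refine ⟨hch, by simp, ?_⟩
        intro z hz y hy
        rw [hlast] at hz
        simp at hz hy
        subst hz; subst hy
        exact hstep.2.2
      · have : l ≠ [] := by intro h0; rw [h0] at hhd; simp at hhd
        rw [List.head?_append]
        rw [hhd]
        rfl
      · exact List.getLast?_concat
      · intro x hx
        rcases List.mem_append.mp hx with h | h
        · exact hmem x h
        · simp at h; subst h; exact hstep.2.1

lemma good_of_clique {G : SimpleGraph α} {B : Set α} (h : G.IsClique B)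
    (hne : B.Nonempty) : GoodSet G B := by
  have conn : ∀ (C : Set α), G.IsClique C → C.Nonempty → (G.induce C).Connected := by
    intro C hC hCne
    rw [induce_connected_iff]
    refine ⟨hCne, ?_⟩
    intro p hp q hq
    rcases eq_or_ne p q with rfl | hne'
    · exact Relation.ReflTransGen.refl
    · exact Relation.ReflTransGen.single ⟨hp, hq, hC hp hq hne'⟩
  refine ⟨hne, conn B h hne, ?_⟩
  intro v _ hne'
  exact conn _ (h.subset Set.diff_subset) hne'

lemma exists_block_superset [Finite α] {G : SimpleGraph α} {C : Set α}
    (h : GoodSet G C) : ∃ B, IsBlock G B ∧ C ⊆ B := by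
  classical
  obtain ⟨B, hB, hmax⟩ := Set.Finite.exists_maximalFor (id : Set α → Set α)
    {D | GoodSet G D ∧ C ⊆ D} (Set.toFinite _) ⟨C, h, subset_rfl⟩
  refine ⟨B, ⟨hB.1, ?_⟩, hB.2⟩
  intro D hD hsub
  exact hsub.antisymm (hmax ⟨hD, hB.2.trans hsub⟩ hsub)

lemma good_of_cycle {G : SimpleGraph α} {l : List α} {a b : α}
    (hnd : l.Nodup) (hch : List.Chain' G.Adj l)
    (hhd : l.head? = some a) (hlast : l.getLast? = some b)
    (hwrap : G.Adj b a) :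
    GoodSet G {x | x ∈ l} := by
  have hlne : l ≠ [] := by intro h0; rw [h0] at hhd; simp at hhd
  have hamem : a ∈ l := by
    cases l with
    | nil => simp at hhd
    | cons z t => simp at hhd; subst hhd; simp
  refine ⟨⟨a, hamem⟩, ?_, ?_⟩
  · rw [induce_connected_iff]
    exact ⟨⟨a, hamem⟩, fun p hp q hq => chain_connWithin hch hp hq⟩
  · intro v hv hne'
    obtain ⟨l1, l2, hsplit⟩ := List.append_of_mem (show v ∈ l from hv)
    subst hsplit
    have hval : v ∉ l1 ∧ v ∉ l2 ∧ l1.Nodup ∧ l2.Nodup := by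
      rw [List.nodup_append] at hnd
      refine ⟨fun hvl1 => hnd.2.2 v hvl1 v (by simp) rfl, (List.nodup_cons.mp hnd.2.1).1, hnd.1,
        (List.nodup_cons.mp hnd.2.1).2⟩
    have hseteq : {x | x ∈ l1 ++ v :: l2} \ {v} = {x | x ∈ l2 ++ l1} := by
      ext x
      simp only [Set.mem_diff, Set.mem_setOf_eq, List.mem_append, List.mem_cons,
        Set.mem_singleton_iff]
      constructor
      · rintro ⟨h1 | h1 | h1, h2⟩
        · exact Or.inr h1
        · exact absurd h1 h2
        · exact Or.inl h1
      · rintro (h1 | h1)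
        · exact ⟨Or.inr (Or.inr h1), fun he => hval.2.1 (he ▸ h1)⟩
        · exact ⟨Or.inl h1, fun he => hval.1 (he ▸ h1)⟩
    rw [hseteq]
    have hch2 : List.Chain' G.Adj (l2 ++ l1) := by
      refine List.isChain_append.mpr ?_
      have hc1 : List.Chain' G.Adj l1 := (List.isChain_append.mp hch).1
      have hc2 : List.Chain' G.Adj l2 := ((List.isChain_append.mp hch).2.1).tail
      refine ⟨hc2, hc1, ?_⟩
      intro x hx y hy
      have hx' : l2.getLast? = some x := Option.mem_def.mp hx
      have hy' : l1.head? = some y := Option.mem_def.mp hy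
      have h5 : (l1 ++ v :: l2).getLast? = some x := by
        rw [List.getLast?_append, show v :: l2 = [v] ++ l2 from rfl, List.getLast?_append, hx']
        rfl
      have h6 : (l1 ++ v :: l2).head? = some y := by
        rw [List.head?_append, hy']
        rfl
      have hbx : b = x := by rw [hlast] at h5; exact Option.some.inj h5
      have hay : a = y := by rw [hhd] at h6; exact Option.some.inj h6
      rw [← hbx, ← hay]
      exact hwrap
    rw [induce_connected_iff]
    refine ⟨?_, fun p hp q hq => chain_connWithin hch2 hp hq⟩
    obtain ⟨z, hz⟩ := hne'
    rw [hseteq] at hz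
    exact ⟨z, hz⟩

end GraphAux


/-! ### Main auxiliary lemmas -/

section MainAux

variable {X V : Type}

lemma cordGraph_adj {L : Set (Set X)} {a b : X} :
    (cordGraph L).Adj a b ↔ a ≠ b ∧ ({a, b} : Set X) ∈ L := Iff.rfl

lemma leafSet_connWithin [Fintype X] [Fintype V] (T : XTree X V) (hph : T.IsPhylo)
    {L : Set (Set X)} (hlasso : T.IsTopoLasso L) :
    ∀ (v : V), ∀ a ∈ T.leafSet v, ∀ b ∈ T.leafSet v,
      ConnWithin (cordGraph L) (T.leafSet v) a b := by
  have main : ∀ n : ℕ, ∀ v : V, (T.leafSet v).ncard ≤ n →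
      ∀ a ∈ T.leafSet v, ∀ b ∈ T.leafSet v, ConnWithin (cordGraph L) (T.leafSet v) a b := by
    intro n
    induction n with
    | zero =>
      intro v hn a ha b hb
      exfalso
      have hpos : 0 < (T.leafSet v).ncard := by
        rw [Set.ncard_pos (Set.toFinite _)]
        exact ⟨a, ha⟩
      omega
    | succ n ih =>
      intro v hn a ha b hb
      by_cases hleaf : T.IsLeaf v
      · obtain ⟨x, hx⟩ := hleaf
        have h1 : T.leafSet v = {x} := by rw [← hx]; exact T.leafSet_leaf x
        have hax : a = x := by rw [h1] at ha; simpa using ha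
        have hbx : b = x := by rw [h1] at hb; simpa using hb
        rw [hax, hbx]
        exact Relation.ReflTransGen.refl
      · have hv : T.Interior v := hleaf
        obtain ⟨ca, hca, hcad⟩ := T.exists_child_desc ha (T.interior_ne_leaf hv a)
        obtain ⟨cb, hcb, hcbd⟩ := T.exists_child_desc hb (T.interior_ne_leaf hv b)
        have hdec : ∀ c, c ∈ T.children v → (T.leafSet c).ncard ≤ n := by
          intro c hc
          have h2 : 2 ≤ (T.children v).ncard := by
            by_cases hr : v = T.root
            · rw [hr]; exact hph.1
            · exact hph.2 v hr hv
          obtain ⟨c', hc', hcc⟩ := Set.exists_ne_of_one_lt_ncard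
            (s := T.children v) (by omega) c
          obtain ⟨z, hz⟩ := T.leafSet_nonempty c'
          have hzc : z ∉ T.leafSet c := fun hzc =>
            T.leafSet_child_disjoint hc' hc hcc hz hzc
          have hss : T.leafSet c ⊂ T.leafSet v := by
            rw [Set.ssubset_def]
            exact ⟨T.leafSet_child_subset hc,
              fun habs => hzc (habs (T.leafSet_child_subset hc' hz))⟩
          have := Set.ncard_lt_ncard hss (Set.toFinite _)
          omega
        by_cases hcase : ca = cb
        · subst hcase
          exact (ih ca (hdec ca hca) a hcad b hcbd).mono (T.leafSet_child_subset hca)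
        · obtain ⟨p, q, hp, hq, hpq⟩ := hlasso v ca cb hca hcb hcase
          have h1 := (ih ca (hdec ca hca) a hcad p hp).mono (T.leafSet_child_subset hca)
          have h2 := (ih cb (hdec cb hcb) q hq b hcbd).mono (T.leafSet_child_subset hcb)
          have hpqne : p ≠ q := fun h =>
            T.leafSet_child_disjoint hca hcb hcase hp (h ▸ hq)
          have hstep : ConnWithin (cordGraph L) (T.leafSet v) p q :=
            Relation.ReflTransGen.single ⟨T.leafSet_child_subset hca hp,
              T.leafSet_child_subset hcb hq, hpqne, hpq⟩
          exact (h1.trans hstep).trans h2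
  intro v
  exact main _ v le_rfl

lemma outside_lemma [Fintype V] (T : XTree X V) {L : Set (Set X)}
    (hmin : T.IsMinTopoLasso L)
    {v c c' : V} {a b x : X}
    (hc : c ∈ T.children v) (hc' : c' ∈ T.children v) (hcc' : c ≠ c')
    (ha : a ∈ T.leafSet c) (hb : b ∈ T.leafSet c')
    (hx : x ∉ T.leafSet v)
    (hxa : ({x, a} : Set X) ∈ L) (hxb : ({x, b} : Set X) ∈ L) : False := by
  have hav : a ∈ T.leafSet v := T.leafSet_child_subset hc ha
  have hbv : b ∈ T.leafSet v := T.leafSet_child_subset hc' hb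
  have hxa' : x ≠ a := fun h => hx (h ▸ hav)
  have hxb' : x ≠ b := fun h => hx (h ▸ hbv)
  have habne : a ≠ b := fun h => T.leafSet_child_disjoint hc hc' hcc' ha (h ▸ hb)
  obtain ⟨u, d1, d2, huint, hd1, hd2, hd12, hxm, ham, hum⟩ := T.cord_data hxa'
  obtain ⟨u', e1, e2, hu'int, he1, he2, he12, hxm', hbm', hum'⟩ := T.cord_data hxb'
  -- u is a strict ancestor of v
  have key : ∀ (w : V) (y : X), w ∈ T.children u → False ∨ True → True := fun _ _ _ _ => trivial
  have hustrict : T.Desc u v ∧ v ≠ u := by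
    have hDua : T.Desc u (T.leaf a) := T.desc_trans (T.desc_of_child hd2) ham
    have hDux : T.Desc u (T.leaf x) := T.desc_trans (T.desc_of_child hd1) hxm
    rcases T.desc_comparable hDua (show T.Desc v (T.leaf a) from hav) with h1 | h1
    · constructor
      · exact h1
      · intro hvu
        rw [← hvu] at hDux
        exact hx hDux
    · exact absurd (T.desc_trans h1 hDux) hx
  have hu'strict : T.Desc u' v ∧ v ≠ u' := by
    have hDub : T.Desc u' (T.leaf b) := T.desc_trans (T.desc_of_child he2) hbm'
    have hDux : T.Desc u' (T.leaf x) := T.desc_trans (T.desc_of_child he1) hxm'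
    rcases T.desc_comparable hDub (show T.Desc v (T.leaf b) from hbv) with h1 | h1
    · constructor
      · exact h1
      · intro hvu
        rw [← hvu] at hDux
        exact hx hDux
    · exact absurd (T.desc_trans h1 hDux) hx
  have huu' : u = u' := by
    have h1 : T.Desc u' u := hum u'
      (T.desc_trans (T.desc_of_child he1) hxm')
      (T.desc_trans hu'strict.1 hav)
    have h2 : T.Desc u u' := hum' u
      (T.desc_trans (T.desc_of_child hd1) hxm)
      (T.desc_trans hustrict.1 hbv)
    exact T.desc_antisymm h2 h1
  subst huu'
  -- the child of u containing v
  obtain ⟨cv, hcv, hcvd⟩ := T.exists_child_desc hustrict.1 hustrict.2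
  have hd2cv : d2 = cv := T.child_unique hd2 hcv ham (T.desc_trans hcvd hav)
  have he2cv : e2 = cv := T.child_unique he2 hcv hbm' (T.desc_trans hcvd hbv)
  have hd1e1 : d1 = e1 := T.child_unique hd1 he1 hxm hxm'
  -- two cords joining (d1, cv) at u
  have hacv : a ∈ T.leafSet cv := by rw [← hd2cv]; exact ham
  have hbcv : b ∈ T.leafSet cv := by rw [← he2cv]; exact hbm'
  have hxd1 : x ∈ T.leafSet d1 := hxm
  have hxb'' : x ∈ T.leafSet d1 := hxm
  have hd1cv : d1 ≠ cv := by rw [← hd2cv]; exact hd12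
  have hcu := cord_unique_aux T hmin hd1 hcv hd1cv hxd1 hacv hxb'' hbcv hxa hxb
  rcases pair_eq_cases hxa' hcu with ⟨_, hab⟩ | ⟨hxbeq, _⟩
  · exact habne hab
  · exact hxb' hxbeq

def markerSet (T : XTree X V) (L : Set (Set X)) (v : V) : Set X :=
  {a | ∃ b : X, ∃ c c' : V, c ∈ T.children v ∧ c' ∈ T.children v ∧ c ≠ c' ∧
      a ∈ T.leafSet c ∧ b ∈ T.leafSet c' ∧ ({a, b} : Set X) ∈ L}

lemma end_unique [Fintype X] [Fintype V] (T : XTree X V) (hph : T.IsPhylo)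
    {L : Set (Set X)} (hmin : T.IsMinTopoLasso L) (hbg : IsBlockGraph (cordGraph L))
    {v c c2 c3 : V} {a a' b b' : X}
    (hcv : c ∈ T.children v)
    (hc2 : c2 ∈ T.children v) (h2ne : c2 ≠ c)
    (hc3 : c3 ∈ T.children v) (h3ne : c3 ≠ c)
    (ha : a ∈ T.leafSet c) (hb : b ∈ T.leafSet c2) (hab : ({a, b} : Set X) ∈ L)
    (ha' : a' ∈ T.leafSet c) (hb' : b' ∈ T.leafSet c3) (hab' : ({a', b'} : Set X) ∈ L) :
    a = a' := by
  have habne : a ≠ b := fun h => T.leafSet_child_disjoint hcv hc2 (Ne.symm h2ne) ha (h ▸ hb)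
  by_cases h23 : c2 = c3
  · subst h23
    have hcu := cord_unique_aux T hmin hcv hc2 (Ne.symm h2ne) ha hb ha' hb' hab hab'
    rcases pair_eq_cases habne hcu with ⟨haa, _⟩ | ⟨hab2, _⟩
    · exact haa
    · exact absurd hab2 (fun h => T.leafSet_child_disjoint hcv hc2 (Ne.symm h2ne) ha (h ▸ hb'))
  · by_contra hne
    obtain ⟨x2, x3, hx2, hx3, hx23⟩ := hmin.1 v c2 c3 hc2 hc3 h23
    have hx23ne : x2 ≠ x3 := fun h => T.leafSet_child_disjoint hc2 hc3 h23 hx2 (h ▸ hx3)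
    set S23 := T.leafSet c2 ∪ T.leafSet c3 with hS23
    have hconn2 := leafSet_connWithin T hph hmin.1 c2 b hb x2 hx2
    have hconn3 := leafSet_connWithin T hph hmin.1 c3 x3 hx3 b' hb'
    have hbb' : ConnWithin (cordGraph L) S23 b b' := by
      refine ((hconn2.mono Set.subset_union_left).trans
        (Relation.ReflTransGen.single ⟨Or.inl hx2, Or.inr hx3, hx23ne, hx23⟩)).trans
        (hconn3.mono Set.subset_union_right)
    have haa' := leafSet_connWithin T hph hmin.1 c a' ha' a ha
    obtain ⟨p, hpnd, hpch, hphd, hplast, hpmem⟩ := connWithin_to_path hbb' (Or.inl hb)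
    obtain ⟨q, hqnd, hqch, hqhd, hqlast, hqmem⟩ := connWithin_to_path haa' ha'
    have hdisj : p.Disjoint q := by
      intro z hzp hzq
      have hzS := hpmem z hzp
      have hzc : z ∈ T.leafSet c := hqmem z hzq
      rcases hzS with h | h
      · exact T.leafSet_child_disjoint hc2 hcv h2ne h hzc
      · exact T.leafSet_child_disjoint hc3 hcv h3ne h hzc
    have hnd : (p ++ q).Nodup := hpnd.append hqnd hdisj
    have hqne : q ≠ [] := by intro h0; rw [h0] at hqhd; simp at hqhd
    have hpne : p ≠ [] := by intro h0; rw [h0] at hphd; simp at hphd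
    have hch : List.Chain' (cordGraph L).Adj (p ++ q) := by
      refine List.isChain_append.mpr ?_
      refine ⟨hpch, hqch, ?_⟩
      intro z hz y hy
      have hz' : z = b' := by
        have := Option.mem_def.mp hz
        rw [hplast] at this
        exact (Option.some.inj this).symm
      have hy' : y = a' := by
        have := Option.mem_def.mp hy
        rw [hqhd] at this
        exact (Option.some.inj this).symm
      rw [hz', hy']
      have hne2 : b' ≠ a' := fun h =>
        T.leafSet_child_disjoint hc3 hcv h3ne hb' (h ▸ ha')
      exact ⟨hne2, by rw [Set.pair_comm]; exact hab'⟩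
    have hhd : (p ++ q).head? = some b := by
      rw [List.head?_append, hphd]
      rfl
    have hlast : (p ++ q).getLast? = some a := by
      rw [List.getLast?_append, hqlast]
      rfl
    have hwrap : (cordGraph L).Adj a b := ⟨habne, hab⟩
    have hgood := good_of_cycle hnd hch hhd hlast hwrap
    obtain ⟨B, hBblock, hBsub⟩ := exists_block_superset hgood
    have hclB := hbg B hBblock
    have hbB : b ∈ B := hBsub (by
      show b ∈ p ++ q
      rcases p with _ | ⟨z, t⟩
      · simp at hphd
      · have : z = b := by simpa using hphd
        rw [← this]
        simp)
    have ha'B : a' ∈ B := hBsub (by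
      show a' ∈ p ++ q
      rcases q with _ | ⟨z, t⟩
      · simp at hqhd
      · have : z = a' := by simpa using hqhd
        simp [← this])
    have hne' : a' ≠ b := fun h =>
      T.leafSet_child_disjoint hcv hc2 (Ne.symm h2ne) ha' (h ▸ hb)
    have hadj := hclB ha'B hbB hne'
    have hcu := cord_unique_aux T hmin hcv hc2 (Ne.symm h2ne) ha' hb ha hb hadj.2 hab
    rcases pair_eq_cases hne' hcu with ⟨haa, _⟩ | ⟨hab2, _⟩
    · exact hne haa.symm
    · exact absurd hab2 (fun h => T.leafSet_child_disjoint hcv hc2 (Ne.symm h2ne) ha' (h ▸ hb))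

lemma marker_clique [Fintype X] [Fintype V] (T : XTree X V) (hph : T.IsPhylo)
    {L : Set (Set X)} (hmin : T.IsMinTopoLasso L) (hbg : IsBlockGraph (cordGraph L))
    (v : V) : (cordGraph L).IsClique (markerSet T L v) := by
  intro x hx y hy hxy
  obtain ⟨xb, cx, cx', hcx, hcx', hcxne, hxmem, hxbmem, hxL⟩ := hx
  obtain ⟨yb, cy, cy', hcy, hcy', hcyne, hymem, hybmem, hyL⟩ := hy
  have hcxy : cx ≠ cy := by
    intro h
    subst h
    exact hxy (end_unique T hph hmin hbg hcx hcx' (Ne.symm hcxne) hcy' (Ne.symm hcyne)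
      hxmem hxbmem hxL hymem hybmem hyL)
  obtain ⟨p, q, hp, hq, hpq⟩ := hmin.1 v cx cy hcx hcy hcxy
  have hxp : x = p := end_unique T hph hmin hbg hcx hcx' (Ne.symm hcxne) hcy
    (Ne.symm hcxy) hxmem hxbmem hxL hp hq hpq
  have hyq : y = q := end_unique T hph hmin hbg hcy hcy' (Ne.symm hcyne) hcx hcxy
    hymem hybmem hyL hq hp (by rw [Set.pair_comm]; exact hpq)
  refine ⟨hxy, ?_⟩
  rw [hxp, hyq]
  exact hpq

lemma block_subset_leafSet [Fintype X] [Fintype V] (T : XTree X V)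
    {L : Set (Set X)} (hmin : T.IsMinTopoLasso L) (hbg : IsBlockGraph (cordGraph L))
    {v c c' : V} {a b : X}
    (hc : c ∈ T.children v) (hc' : c' ∈ T.children v) (hcc' : c ≠ c')
    (ha : a ∈ T.leafSet c) (hb : b ∈ T.leafSet c')
    {B : Set X} (hB : IsBlock (cordGraph L) B) (haB : a ∈ B) (hbB : b ∈ B) :
    ∀ x ∈ B, x ∈ T.leafSet v := by
  intro x hxB
  by_contra hx
  have hav : a ∈ T.leafSet v := T.leafSet_child_subset hc ha
  have hbv : b ∈ T.leafSet v := T.leafSet_child_subset hc' hb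
  have hxa : x ≠ a := fun h => hx (h ▸ hav)
  have hxb : x ≠ b := fun h => hx (h ▸ hbv)
  have hclB := hbg B hB
  have h1 := hclB hxB haB hxa
  have h2 := hclB hxB hbB hxb
  exact outside_lemma T hmin hc hc' hcc' ha hb hx h1.2 h2.2

lemma block_eq_marker [Fintype X] [Fintype V] (T : XTree X V) (hph : T.IsPhylo)
    {L : Set (Set X)} (hmin : T.IsMinTopoLasso L) (hbg : IsBlockGraph (cordGraph L))
    {v c c' : V} {a b : X}
    (hc : c ∈ T.children v) (hc' : c' ∈ T.children v) (hcc' : c ≠ c')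
    (ha : a ∈ T.leafSet c) (hb : b ∈ T.leafSet c')
    {B : Set X} (hB : IsBlock (cordGraph L) B) (haB : a ∈ B) (hbB : b ∈ B) :
    B = markerSet T L v := by
  have hv : T.Interior v := T.interior_of_child hc
  have hclB := hbg B hB
  have hsub := block_subset_leafSet T hmin hbg hc hc' hcc' ha hb hB haB hbB
  have hBM : B ⊆ markerSet T L v := by
    intro x hx
    have hxv := hsub x hx
    obtain ⟨cx, hcx, hcxd⟩ := T.exists_child_desc hxv (T.interior_ne_leaf hv x)
    by_cases hxc : cx = c
    · have hxb : x ≠ b := fun h =>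
        T.leafSet_child_disjoint hc hc' hcc' (by rw [← hxc]; exact hcxd) (h ▸ hb)
      have hadj := hclB hx hbB hxb
      exact ⟨b, cx, c', hcx, hc', (by rw [hxc]; exact hcc'), hcxd, hb, hadj.2⟩
    · have hxa : x ≠ a := fun h =>
        hxc (T.child_unique hcx hc hcxd (by rw [h]; exact ha))
      have hadj := hclB hx haB hxa
      exact ⟨a, cx, c, hcx, hc, hxc, hcxd, ha, hadj.2⟩
  have hMgood : GoodSet (cordGraph L) (markerSet T L v) :=
    good_of_clique (marker_clique T hph hmin hbg v) ⟨a, hBM haB⟩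
  exact hB.2 _ hMgood hBM

end MainAux

/-- for a minimal topological lasso `L` with `Γ(L)` a block graph, every
interior vertex `v` is the lca of a unique block of `Γ(L)`, and `v ↦ B_v` is a
bijection between interior vertices and blocks, with inverse `B ↦ lca(V(B))`. -/
theorem stmt12 {X V : Type} [Fintype X] [Fintype V] (T : XTree X V)
    (hph : T.IsPhylo) (hX : 3 ≤ Fintype.card X)
    (L : Set (Set X)) (hc : ∀ c ∈ L, IsCord c) (hcov : ∀ x : X, ∃ c ∈ L, x ∈ c)
    (hmin : T.IsMinTopoLasso L) (hbg : IsBlockGraph (cordGraph L)) :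
    (∀ v : V, T.Interior v →
        ∃! B : Set X, IsBlock (cordGraph L) B ∧ T.IsLCA v (T.leaf '' B)) ∧
      ∀ B : Set X, IsBlock (cordGraph L) B →
        ∃! v : V, T.Interior v ∧ T.IsLCA v (T.leaf '' B) := by
  have hlasso := hmin.1
  constructor
  · -- Part 1
    intro v hv
    obtain ⟨c, c', hcm, hcm', hcc'⟩ := T.two_children hph hv
    obtain ⟨a, b, ha, hb, hab⟩ := hlasso v c c' hcm hcm' hcc'
    have habne : a ≠ b := fun h => T.leafSet_child_disjoint hcm hcm' hcc' ha (h ▸ hb)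
    have hpairclique : (cordGraph L).IsClique {a, b} := by
      intro p hp q hq hpq
      rcases hp with rfl | hp <;> rcases hq with rfl | hq
      · exact absurd rfl hpq
      · rw [Set.mem_singleton_iff] at hq
        subst hq
        exact ⟨habne, hab⟩
      · rw [Set.mem_singleton_iff] at hp
        subst hp
        exact ⟨Ne.symm habne, by rw [Set.pair_comm]; exact hab⟩
      · rw [Set.mem_singleton_iff] at hp hq
        subst hp; subst hq
        exact absurd rfl hpq
    obtain ⟨B, hBblock, hBsub⟩ := exists_block_superset
      (good_of_clique hpairclique ⟨a, by simp⟩)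
    have haB : a ∈ B := hBsub (by simp)
    have hbB : b ∈ B := hBsub (by simp)
    have hBsubleaf := block_subset_leafSet T hmin hbg hcm hcm' hcc' ha hb hBblock haB hbB
    have hlca : T.IsLCA v (T.leaf '' B) := by
      constructor
      · rintro w ⟨x, hxB, rfl⟩
        exact hBsubleaf x hxB
      · intro u hu
        exact T.lca_pair hcm hcm' hcc' ha hb u
          (hu _ ⟨a, haB, rfl⟩) (hu _ ⟨b, hbB, rfl⟩)
    refine ⟨B, ⟨hBblock, hlca⟩, ?_⟩
    rintro B' ⟨hB'block, hlca'⟩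
    -- find two elements of B' in distinct children of v
    obtain ⟨p, hp⟩ := hB'block.1.1
    have hpv : T.Desc v (T.leaf p) := hlca'.1 _ ⟨p, hp, rfl⟩
    obtain ⟨cp, hcp, hcpd⟩ := T.exists_child_desc hpv (T.interior_ne_leaf hv p)
    have hq : ∃ q ∈ B', ¬ T.Desc cp (T.leaf q) := by
      by_contra h
      push_neg at h
      have h1 : T.Desc cp v := hlca'.2 cp (by rintro w ⟨y, hyB, rfl⟩; exact h y hyB)
      exact hcp.2 (T.desc_antisymm h1 (T.desc_of_child hcp))
    obtain ⟨q, hqB, hqnd⟩ := hq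
    have hqv : T.Desc v (T.leaf q) := hlca'.1 _ ⟨q, hqB, rfl⟩
    obtain ⟨cq, hcq, hcqd⟩ := T.exists_child_desc hqv (T.interior_ne_leaf hv q)
    have hcpq : cp ≠ cq := fun h => hqnd (by rw [h]; exact hcqd)
    have e1 := block_eq_marker T hph hmin hbg hcp hcq hcpq hcpd hcqd hB'block hp hqB
    have e2 := block_eq_marker T hph hmin hbg hcm hcm' hcc' ha hb hBblock haB hbB
    rw [e1, e2]
  · -- Part 2
    intro B hB
    obtain ⟨a, haB⟩ := hB.1.1
    have hsecond : ∃ b ∈ B, b ≠ a := by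
      by_contra h
      push_neg at h
      obtain ⟨e, heL, hae⟩ := hcov a
      obtain ⟨p, q, hpq, hepq⟩ := hc e heL
      have hay : ∃ y, y ≠ a ∧ ({a, y} : Set X) ∈ L := by
        rw [hepq] at hae heL
        rcases hae with rfl | hae
        · exact ⟨q, Ne.symm hpq, heL⟩
        · rw [Set.mem_singleton_iff] at hae
          subst hae
          exact ⟨p, hpq, by rw [Set.pair_comm]; exact heL⟩
      obtain ⟨y, hy, hyL⟩ := hay
      have hpc : (cordGraph L).IsClique {a, y} := by
        intro s hs t ht hst
        rcases hs with rfl | hs <;> rcases ht with rfl | ht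
        · exact absurd rfl hst
        · rw [Set.mem_singleton_iff] at ht
          subst ht
          exact ⟨Ne.symm hy, hyL⟩
        · rw [Set.mem_singleton_iff] at hs
          subst hs
          exact ⟨hy, by rw [Set.pair_comm]; exact hyL⟩
        · rw [Set.mem_singleton_iff] at hs ht
          subst hs; subst ht
          exact absurd rfl hst
      have hBa : B = {a} := by
        ext z
        simp only [Set.mem_singleton_iff]
        exact ⟨fun hz => h z hz, fun hz => hz ▸ haB⟩
      have hBay := hB.2 {a, y} (good_of_clique hpc ⟨a, by simp⟩)
        (by rw [hBa]; intro z hz; rw [Set.mem_singleton_iff] at hz; subst hz; simp)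
      have : y ∈ B := by rw [hBay]; simp
      rw [hBa] at this
      rw [Set.mem_singleton_iff] at this
      exact hy this
    obtain ⟨b, hbB, hba⟩ := hsecond
    have hadj := hbg B hB hbB haB hba
    obtain ⟨v, cb, ca, hvint, hcb, hca, hne, hbc, hac, hlcamin⟩ := T.cord_data hba
    have hsub := block_subset_leafSet T hmin hbg hcb hca hne hbc hac hB hbB haB
    have hlcaB : T.IsLCA v (T.leaf '' B) := by
      constructor
      · rintro w ⟨x, hxB, rfl⟩
        exact hsub x hxB
      · intro u hu
        exact hlcamin u (hu _ ⟨b, hbB, rfl⟩) (hu _ ⟨a, haB, rfl⟩)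
    refine ⟨v, ⟨hvint, hlcaB⟩, ?_⟩
    rintro v' ⟨hv'int, hlca'⟩
    have h1 : T.Desc v' v := hlcamin v'
      (hlca'.1 _ ⟨b, hbB, rfl⟩) (hlca'.1 _ ⟨a, haB, rfl⟩)
    have h2 : T.Desc v v' := hlca'.2 v hlcaB.1
    exact T.desc_antisymm h1 h2
end TreeAux
end

section
/- Let T be a non-degenerate rooted phylogenetic X-tree, σ a total order on X, and f: cl(T) → X a cluster marker map for T and σ. Then the set L_{(T,f)} is a topological lasso for T; moreover it is a minimal topological lasso for T. -/
open scoped Classical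

section Aux

variable {X V : Type}

lemma xdesc_refl (T : XTree X V) (v : V) : T.Desc v v := ⟨0, rfl⟩

lemma xdesc_trans (T : XTree X V) {u v w : V} (h1 : T.Desc u v) (h2 : T.Desc v w) :
    T.Desc u w := by
  obtain ⟨n, hn⟩ := h1; obtain ⟨m, hm⟩ := h2
  exact ⟨n + m, by rw [Function.iterate_add_apply, hm, hn]⟩

lemma xparent_iterate_root (T : XTree X V) (n : ℕ) : T.parent^[n] T.root = T.root := by
  induction n with
  | zero => rfl
  | succ n ih => rw [Function.iterate_succ_apply, T.parent_root, ih]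

lemma xdesc_antisymm (T : XTree X V) {u v : V} (h1 : T.Desc u v) (h2 : T.Desc v u) :
    u = v := by
  obtain ⟨n, hn⟩ := h1
  obtain ⟨m, hm⟩ := h2
  have hper : T.parent^[m + n] v = v := by
    rw [Function.iterate_add_apply, hn, hm]
  rcases Nat.eq_zero_or_pos (m + n) with h0 | hpos
  · have hn0 : n = 0 := by omega
    subst hn0; simpa using hn.symm
  · obtain ⟨N, hN⟩ := T.reaches v
    set k := m + n with hk
    have hjk : ∀ j, T.parent^[j * k] v = v := by
      intro j; induction j with
      | zero => simp
      | succ j ih => rw [Nat.succ_mul, Function.iterate_add_apply, hper, ih]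
    have hr : T.parent^[N % k] v = T.root := by
      calc T.parent^[N % k] v = T.parent^[N % k] (T.parent^[N / k * k] v) := by rw [hjk]
        _ = T.parent^[N % k + N / k * k] v := (Function.iterate_add_apply _ _ _ _).symm
        _ = T.parent^[N] v := by rw [Nat.mod_add_div']
        _ = T.root := hN
    have hvroot : v = T.root := by
      have hlt : N % k < k := Nat.mod_lt _ hpos
      calc v = T.parent^[k] v := hper.symm
        _ = T.parent^[k - N % k] (T.parent^[N % k] v) := by
            rw [← Function.iterate_add_apply, Nat.sub_add_cancel hlt.le]
        _ = T.parent^[k - N % k] T.root := by rw [hr]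
        _ = T.root := xparent_iterate_root T _
    rw [hvroot] at hn ⊢
    rw [← hn, xparent_iterate_root]

lemma xdesc_comparable (T : XTree X V) {u v x : V} (h1 : T.Desc u x) (h2 : T.Desc v x) :
    T.Desc u v ∨ T.Desc v u := by
  obtain ⟨n, hn⟩ := h1; obtain ⟨m, hm⟩ := h2
  rcases le_total n m with h | h
  · right
    exact ⟨m - n, by rw [← hn, ← Function.iterate_add_apply, Nat.sub_add_cancel h]; exact hm⟩
  · left
    exact ⟨n - m, by rw [← hm, ← Function.iterate_add_apply, Nat.sub_add_cancel h]; exact hn⟩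

lemma xdesc_parent_of_strict (T : XTree X V) {u w : V} (h : T.Desc u w) (hne : u ≠ w) :
    T.Desc u (T.parent w) := by
  obtain ⟨n, hn⟩ := h
  cases n with
  | zero => simp only [Function.iterate_zero, id] at hn; exact absurd hn.symm hne
  | succ n => exact ⟨n, by rw [← hn, Function.iterate_succ_apply]⟩

lemma xchild_ne_root (T : XTree X V) {v c : V} (h : c ∈ T.children v) : c ≠ T.root := by
  rintro rfl
  exact h.2 (T.parent_root.symm.trans h.1)

lemma xinterior_of_child (T : XTree X V) {v c : V} (h : c ∈ T.children v) : T.Interior v := by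
  intro hv
  exact h.2 ((T.leaf_iff v).mpr hv c h.1)

lemma xdesc_of_child (T : XTree X V) {v c : V} (h : c ∈ T.children v) : T.Desc v c :=
  ⟨1, by simpa using h.1⟩

lemma xleafSet_mono (T : XTree X V) {u v : V} (h : T.Desc u v) :
    T.leafSet v ⊆ T.leafSet u := fun _ hx => xdesc_trans T h hx

lemma xsibling_disjoint (T : XTree X V) {v c₁ c₂ : V} (h1 : c₁ ∈ T.children v)
    (h2 : c₂ ∈ T.children v) (hne : c₁ ≠ c₂) {x : X}
    (hx1 : x ∈ T.leafSet c₁) (hx2 : x ∈ T.leafSet c₂) : False := by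
  rcases xdesc_comparable T hx1 hx2 with h | h
  · have hd : T.Desc c₁ v := by
      have := xdesc_parent_of_strict T h hne
      rwa [h2.1] at this
    exact h1.2 (xdesc_antisymm T hd (xdesc_of_child T h1))
  · have hd : T.Desc c₂ v := by
      have := xdesc_parent_of_strict T h (Ne.symm hne)
      rwa [h1.1] at this
    exact h2.2 (xdesc_antisymm T hd (xdesc_of_child T h2))

lemma xmarkRel_exists (T : XTree X V) (f : Set X → X) (c : V) :
    ∃ a, markRel T f c a := by
  by_cases h : T.IsLeaf c
  · obtain ⟨a, ha⟩ := h; exact ⟨a, Or.inl ha⟩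
  · exact ⟨f (T.leafSet c), Or.inr ⟨h, rfl⟩⟩

lemma xmarkRel_mem [LinearOrder X] (T : XTree X V) {f : Set X → X}
    (hf : IsClusterMarker T f) {c : V} (hc : c ≠ T.root) {a : X} (h : markRel T f c a) :
    a ∈ T.leafSet c := by
  rcases h with h | ⟨hint, rfl⟩
  · exact ⟨0, h⟩
  · have hmem : T.leafSet c ∈ clSet T := ⟨c, hc, hint, rfl⟩
    obtain ⟨h1, h2⟩ := hf _ hmem
    by_cases hex : ∃ B ∈ clSet T, B ⊂ T.leafSet c
    · exact (h1 hex).1.1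
    · exact (h2 hex).1

lemma xmarkRel_unique (T : XTree X V) (f : Set X → X) {c : V} {a b : X}
    (ha : markRel T f c a) (hb : markRel T f c b) : a = b := by
  rcases ha with ha | ⟨hi, rfl⟩ <;> rcases hb with hb | ⟨hi', h⟩
  · exact T.leaf_inj (ha.trans hb.symm)
  · exact absurd ⟨a, ha⟩ hi'
  · exact absurd ⟨b, hb⟩ hi
  · exact h.symm

/-- Key uniqueness: a cord of the full lasso joining the subtrees of two distinct
siblings `c₁, c₂` must be the cord of their markers. -/
lemma xkey [LinearOrder X] (T : XTree X V) {f : Set X → X} (hf : IsClusterMarker T f)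
    {v c₁ c₂ u d₁ d₂ : V} (hc1 : c₁ ∈ T.children v) (hc2 : c₂ ∈ T.children v)
    (hc : c₁ ≠ c₂) (hd1 : d₁ ∈ T.children u) (hd2 : d₂ ∈ T.children u) (hd : d₁ ≠ d₂)
    {α β : X} (hα : markRel T f d₁ α) (hβ : markRel T f d₂ β)
    (hα1 : α ∈ T.leafSet c₁) (hβ2 : β ∈ T.leafSet c₂) : d₁ = c₁ ∧ d₂ = c₂ := by
  have hαd : α ∈ T.leafSet d₁ := xmarkRel_mem T hf (xchild_ne_root T hd1) hα
  have hβd : β ∈ T.leafSet d₂ := xmarkRel_mem T hf (xchild_ne_root T hd2) hβ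
  by_cases hdc : d₁ = c₁
  · subst hdc
    have huv : u = v := hd1.1.symm.trans hc1.1
    subst huv
    refine ⟨rfl, ?_⟩
    by_contra hne
    exact xsibling_disjoint T hd2 hc2 hne hβd hβ2
  · rcases xdesc_comparable T hαd hα1 with h | h
    · -- Desc d₁ c₁, d₁ ≠ c₁ : then Desc d₁ v, so leafSet c₂ ⊆ leafSet d₁
      have hdv : T.Desc d₁ v := by
        have := xdesc_parent_of_strict T h hdc
        rwa [hc1.1] at this
      have : β ∈ T.leafSet d₁ :=
        xleafSet_mono T (xdesc_trans T hdv (xdesc_of_child T hc2)) hβ2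
      exact (xsibling_disjoint T hd1 hd2 hd this hβd).elim
    · -- Desc c₁ d₁, d₁ ≠ c₁ : then Desc c₁ u, so leafSet d₂ ⊆ leafSet c₁
      have hcu : T.Desc c₁ u := by
        have := xdesc_parent_of_strict T h (fun he => hdc he.symm)
        rwa [hd1.1] at this
      have : β ∈ T.leafSet c₁ :=
        xleafSet_mono T (xdesc_trans T hcu (xdesc_of_child T hd2)) hβd
      exact (xsibling_disjoint T hc1 hc2 hc this hβ2).elim

end Aux

/-- for a non-degenerate X-tree `T`, a total order `σ` on `X` and a
cluster marker map `f`, the set `L_{(T,f)}` is a (minimal) topological lasso for `T`. -/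
theorem stmt15 {X V : Type} [Fintype X] [Fintype V] [LinearOrder X] (T : XTree X V)
    (hph : T.IsPhylo) (hX : 3 ≤ Fintype.card X) (hnd : T.NonDegenerate)
    (f : Set X → X) (hf : IsClusterMarker T f) :
    T.IsTopoLasso (lassoFull T f) ∧ T.IsMinTopoLasso (lassoFull T f) := by
  have hlasso : T.IsTopoLasso (lassoFull T f) := by
    intro v c₁ c₂ hc1 hc2 hne
    obtain ⟨a, ha⟩ := xmarkRel_exists T f c₁
    obtain ⟨b, hb⟩ := xmarkRel_exists T f c₂
    exact ⟨a, b, xmarkRel_mem T hf (xchild_ne_root T hc1) ha,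
      xmarkRel_mem T hf (xchild_ne_root T hc2) hb,
      ⟨v, xinterior_of_child T hc1, c₁, c₂, hc1, hc2, hne, a, b, ha, hb, rfl⟩⟩
  refine ⟨hlasso, hlasso, ?_⟩
  intro L' hsub hL'
  apply Set.Subset.antisymm hsub
  rintro e ⟨v, hv, c₁, c₂, hc1, hc2, hne, a, b, ha, hb, rfl⟩
  obtain ⟨a', b', ha', hb', hmem⟩ := hL' v c₁ c₂ hc1 hc2 hne
  obtain ⟨u, hu, d₁, d₂, hd1, hd2, hdne, α, β, hα, hβ, heq⟩ := hsub hmem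
  have hab : a' ≠ b' := fun h => xsibling_disjoint T hc1 hc2 hne ha' (h ▸ hb')
  have ha'mem : a' ∈ ({α, β} : Set X) := heq ▸ Set.mem_insert a' {b'}
  have hb'mem : b' ∈ ({α, β} : Set X) := heq ▸ Set.mem_insert_of_mem a' rfl
  rcases ha'mem with h1 | h1
  · -- a' = α
    have h2 : b' = β := by
      rcases hb'mem with h2 | h2
      · exact absurd (h1.trans h2.symm) hab
      · exact h2
    obtain ⟨e1, e2⟩ := xkey T hf hc1 hc2 hne hd1 hd2 hdne hα hβ (h1 ▸ ha') (h2 ▸ hb')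
    subst e1; subst e2
    have : ({a, b} : Set X) = {a', b'} := by
      rw [xmarkRel_unique T f ha (h1 ▸ hα), xmarkRel_unique T f hb (h2 ▸ hβ), h1, h2]
    rw [this]; exact hmem
  · -- a' = β
    have h1' : a' = β := h1
    have h2 : b' = α := by
      rcases hb'mem with h2 | h2
      · exact h2
      · exact absurd (h1'.trans (Set.mem_singleton_iff.mp h2).symm) hab
    obtain ⟨e1, e2⟩ := xkey T hf hc1 hc2 hne hd2 hd1 (Ne.symm hdne) hβ hα (h1' ▸ ha') (h2 ▸ hb')
    subst e1; subst e2
    have : ({a, b} : Set X) = {a', b'} := by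
      rw [xmarkRel_unique T f ha (h1' ▸ hβ), xmarkRel_unique T f hb (h2 ▸ hα), h1', h2]
    rw [this]; exact hmem
end
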